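/- Fix integers p ≥ 1, r ≥ 1, k ≥ 1, m ≥ 1 and mutually disjoint subsets C_1,…,C_p of {1,2,…,m} with |C_1|+⋯+|C_{p−1}| < k ≤ |C_1|+⋯+|C_p|, and set u = |C_1|+⋯+|C_p| − k. Let B_1,…,B_r be mutually disjoint nonempty subsets of {1,2,…,k} such that B_i ⊆ C_1 ∪ ⋯ ∪ C_{min(i,p)} for all 1 ≤ i ≤ r and B_1 ∪ ⋯ ∪ B_r = {1,2,…,k}. Then |B_1| + 2|B_2| + ⋯ + r|B_r| = |C_1| + 2|C_2| + ⋯ + (p−1)|C_{p−1}| + p(|C_p| − u) holds if and only if r = p, B_i = C_i for all 1 ≤ i ≤ r−1, and B_r ⊆ C_r. -/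

import Mathlib

open Finset Polynomial LaurentPolynomial

attribute [local instance] Classical.propDecidable

/-- The value `π_i` of the word of `π` at the 1-based position `i` (values in `{1, …, m}`). -/
def wordAt (m : ℕ) (π : Equiv.Perm (Fin m)) (i : ℕ) : ℕ :=
  if h : i - 1 < m then ((π ⟨i - 1, h⟩ : Fin m) : ℕ) + 1 else 0

/-- The descent set `Des(π) ⊆ {1, …, m-1}` (1-based positions). -/
def DesSet (m : ℕ) (π : Equiv.Perm (Fin m)) : Finset ℕ :=
  (Finset.Ico 1 m).filter fun i => wordAt m π (i + 1) < wordAt m π i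

/-- The number of descents `des(π)`. -/
def desNum (m : ℕ) (π : Equiv.Perm (Fin m)) : ℕ := (DesSet m π).card

/-- The major index `maj(π)`. -/
def majIdx (m : ℕ) (π : Equiv.Perm (Fin m)) : ℕ := ∑ i ∈ DesSet m π, i

/-- The partial order `P` on `{1,…,m}` (encoded as `Fin m`) is naturally labeled:
`x ≤_P y` implies `x ≤ y` as integers. -/
def NatLabeled (m : ℕ) (P : PartialOrder (Fin m)) : Prop :=
  ∀ x y : Fin m, P.le x y → x ≤ y

/-- `π` is a linear extension of `P`: `π_i ≤_P π_j` implies `i ≤ j`. -/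
def IsLinExt (m : ℕ) (P : PartialOrder (Fin m)) (π : Equiv.Perm (Fin m)) : Prop :=
  ∀ i j : Fin m, P.le (π i) (π j) → i ≤ j

/-- `mc(x)`: the maximum number of elements of a chain of `P` whose largest element is `x`. -/
noncomputable def mc (m : ℕ) (P : PartialOrder (Fin m)) (x : Fin m) : ℕ :=
  sSup {k : ℕ | ∃ s : Finset (Fin m),
    s.card = k ∧ IsChain P.le ↑s ∧ x ∈ s ∧ ∀ y ∈ s, P.le y x}

/-- `m̄c(x)`: the maximum number of elements of a chain of `P` whose smallest element is `x`. -/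
noncomputable def mcUp (m : ℕ) (P : PartialOrder (Fin m)) (x : Fin m) : ℕ :=
  sSup {k : ℕ | ∃ s : Finset (Fin m),
    s.card = k ∧ IsChain P.le ↑s ∧ x ∈ s ∧ ∀ y ∈ s, P.le x y}

/-- The `q`-integer `[n]_q` for `n ∈ ℤ`, as a Laurent polynomial:
`[n]_q = 1 + q + ⋯ + q^{n-1}` for `n ≥ 0` and `[-n]_q = -q^{-n} [n]_q`. -/
noncomputable def qInt (n : ℤ) : LaurentPolynomial ℤ :=
  if 0 ≤ n then ∑ i ∈ Finset.range n.toNat, T (i : ℤ)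
  else -(T n * ∑ i ∈ Finset.range (-n).toNat, T (i : ℤ))

/-- The polynomial `F_P(q,x) = Σ_{π ∈ L(P)} q^{maj π} Π_{i=1}^m ([i - des π]_q + q^{i - des π} x)`,
an element of `(ℤ[q,q⁻¹])[x]` (it in fact lies in `ℤ[q,x]`). -/
noncomputable def Fpoly (m : ℕ) (P : PartialOrder (Fin m)) : Polynomial (LaurentPolynomial ℤ) :=
  ∑ π ∈ Finset.univ.filter (fun π => IsLinExt m P π),
    Polynomial.C (T (majIdx m π : ℤ)) *
      ∏ i ∈ Finset.Icc 1 m,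
        (Polynomial.C (qInt ((i : ℤ) - desNum m π)) +
          Polynomial.C (T ((i : ℤ) - desNum m π)) * Polynomial.X)

/-- The Newton polygon of an element of `(ℤ[q,q⁻¹])[x]`, in the `(q,x)`-plane. -/
noncomputable def NTL (f : Polynomial (LaurentPolynomial ℤ)) : Set (ℝ × ℝ) :=
  convexHull ℝ {p : ℝ × ℝ | ∃ (i : ℤ) (k : ℕ), ((f.coeff k).coeff i) ≠ 0 ∧ p = ((i : ℝ), (k : ℝ))}

/-- The Newton polygon of an element of `ℤ[q][x]`, in the `(q,x)`-plane. -/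
noncomputable def NTP (f : Polynomial (Polynomial ℤ)) : Set (ℝ × ℝ) :=
  convexHull ℝ {p : ℝ × ℝ | ∃ (i k : ℕ), (f.coeff k).coeff i ≠ 0 ∧ p = ((i : ℝ), (k : ℝ))}

/-- The polygon `C(a_1,…,a_m;h)`: the convex hull of `(0,0)`, `(a_1+⋯+a_i, i)` for
`1 ≤ i ≤ m`, `(h,m)` and `(h-m,0)`. -/
noncomputable def Cpolygon (m : ℕ) (a : ℕ → ℕ) (h : ℕ) : Set (ℝ × ℝ) :=
  convexHull ℝ ({((0 : ℝ), (0 : ℝ)), ((h : ℝ), (m : ℝ)), ((h : ℝ) - (m : ℝ), (0 : ℝ))} ∪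
    {p : ℝ × ℝ | ∃ i ∈ Finset.Icc 1 m, p = ((∑ j ∈ Finset.Icc 1 i, (a j : ℝ)), (i : ℝ))})

/-- The index of the descent block of `π` containing the 1-based position `j`. -/
def blockIdx (m : ℕ) (π : Equiv.Perm (Fin m)) (j : ℕ) : ℕ :=
  1 + ((Finset.Ico 1 j).filter (fun i => i ∉ DesSet m π)).card

/-- `DB_i(π)`: the set of entries of the `i`-th descent block of `π`. -/
def DB (m : ℕ) (π : Equiv.Perm (Fin m)) (i : ℕ) : Finset (Fin m) :=
  Finset.univ.filter fun x => blockIdx m π (((π.symm x : Fin m) : ℕ) + 1) = i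

/-- `PP(P,n)`: the set of `P`-partitions (order-reversing maps) with all parts at most `n`,
encoded as functions `Fin m → Fin (n+1)`. -/
noncomputable def PPset (m : ℕ) (P : PartialOrder (Fin m)) (n : ℕ) :
    Finset (Fin m → Fin (n + 1)) :=
  Finset.univ.filter fun σ => ∀ x y : Fin m, P.le x y → σ y ≤ σ x

/-- `|σ| = σ(1) + ⋯ + σ(m)`. -/
def sizePP (m n : ℕ) (σ : Fin m → Fin (n + 1)) : ℕ := ∑ i : Fin m, (σ i : ℕ)

/-- The `q`-integer `[n]_q` for `n ∈ ℕ`, as an ordinary polynomial in `q`. -/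
noncomputable def qIntP (n : ℕ) : Polynomial ℤ := ∑ i ∈ Finset.range n, Polynomial.X ^ i

/-- The `q`-factorial `[n]_q!`. -/
noncomputable def qFact (n : ℕ) : Polynomial ℤ := ∏ i ∈ Finset.Icc 1 n, qIntP i

/-- The dual poset `P̄` : `x ≤_{P̄} y` iff `y ≤_P x`. -/
def dualP (m : ℕ) (P : PartialOrder (Fin m)) : PartialOrder (Fin m) where
  le x y := P.le y x
  lt x y := P.lt y x
  le_refl x := P.le_refl x
  le_trans a b c h1 h2 := P.le_trans c b a h2 h1
  le_antisymm a b h1 h2 := P.le_antisymm a b h2 h1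
  lt_iff_le_not_ge a b := P.lt_iff_le_not_ge b a

/-- The canonical ring map `ℤ[q] → ℚ(q)`. -/
noncomputable def toRF : Polynomial ℤ →+* RatFunc ℚ :=
  (algebraMap (Polynomial ℚ) (RatFunc ℚ)).comp (Polynomial.mapRingHom (Int.castRingHom ℚ))

/-- `W(n·O(P), q) = Σ_σ q^{|σ|}`, the sum being over all order-preserving maps
`σ : P → {0,…,n}`. -/
noncomputable def Wpoly (m : ℕ) (P : PartialOrder (Fin m)) (n : ℕ) : Polynomial ℤ :=
  ∑ σ ∈ (Finset.univ.filter fun σ : Fin m → Fin (n + 1) =>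
      ∀ x y : Fin m, P.le x y → σ x ≤ σ y),
    Polynomial.X ^ (∑ i : Fin m, (σ i : ℕ))

/-- The polynomial `q^{mj - s(s-1)/2} Π_{i=1}^{s-1} (x - [i]_q) Π_{i=1}^{m-s} (q^i x + [i]_q)`. -/
noncomputable def tSummand (m s mj : ℕ) : Polynomial (LaurentPolynomial ℤ) :=
  Polynomial.C (T ((mj : ℤ) - (s * (s - 1) / 2 : ℕ))) *
    (∏ i ∈ Finset.Icc 1 (s - 1), (Polynomial.X - Polynomial.C (qInt (i : ℤ)))) *
    ∏ i ∈ Finset.Icc 1 (m - s),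
      (Polynomial.C (T (i : ℤ)) * Polynomial.X + Polynomial.C (qInt (i : ℤ)))

/-- `t(π,k)`: the coefficient of `x^{k-1}` in
`q^{maj π - s(s-1)/2} Π_{i=1}^{s-1} (x - [i]_q) Π_{i=1}^{m-s} (q^i x + [i]_q)`,
where `s = des π`. -/
noncomputable def tpoly (m : ℕ) (π : Equiv.Perm (Fin m)) (k : ℕ) : LaurentPolynomial ℤ :=
  (tSummand m (desNum m π) (majIdx m π)).coeff (k - 1)

/-- The polynomial `A(q,x) = Π_{i=1}^m (q^i x + [i]_q)`. -/
noncomputable def Apoly (m : ℕ) : Polynomial (LaurentPolynomial ℤ) :=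
  ∏ i ∈ Finset.Icc 1 m,
    (Polynomial.C (T (i : ℤ)) * Polynomial.X + Polynomial.C (qInt (i : ℤ)))

/-- The polynomial `B(q,x) = x Σ_{π ∈ L(P), des π ≥ 1} q^{maj π - s(s-1)/2}
Π_{i=1}^{s-1} (x - [i]_q) Π_{i=1}^{m-s} (q^i x + [i]_q)`, where `s = des π`;
one has `F_P(q,x) = A(q,x) + B(q,x)`. -/
noncomputable def Bpoly (m : ℕ) (P : PartialOrder (Fin m)) : Polynomial (LaurentPolynomial ℤ) :=
  Polynomial.X *
    ∑ π ∈ Finset.univ.filter (fun π => IsLinExt m P π ∧ 1 ≤ desNum m π),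
      tSummand m (desNum m π) (majIdx m π)

lemma aux_sum7 (b : ℕ → ℕ) (n : ℕ) :
    (∑ i ∈ Finset.Icc 1 n, i * b i) +
      ∑ t ∈ Finset.Icc 1 n, (∑ i ∈ Finset.Icc 1 (t - 1), b i)
      = n * ∑ i ∈ Finset.Icc 1 n, b i := by
  induction n with
  | zero => simp
  | succ n ih =>
    rw [Finset.sum_Icc_succ_top (by omega : 1 ≤ n + 1),
        Finset.sum_Icc_succ_top (by omega : 1 ≤ n + 1)
          (f := fun t => ∑ i ∈ Finset.Icc 1 (t - 1), b i),
        Finset.sum_Icc_succ_top (by omega : 1 ≤ n + 1) (f := b)]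
    simp only [Nat.add_sub_cancel]
    simp only [mul_add, add_mul, one_mul]
    linarith [ih]

lemma aux_step7 (f : ℕ → ℕ) (t : ℕ) (ht : 1 ≤ t) :
    ∑ i ∈ Finset.Icc 1 t, f i = (∑ i ∈ Finset.Icc 1 (t - 1), f i) + f t := by
  cases t with
  | zero => omega
  | succ s => rw [Finset.sum_Icc_succ_top (by omega : 1 ≤ s + 1)]; simp

theorem statement7 (p r k m : ℕ) (hp : 1 ≤ p) (hr : 1 ≤ r) (hk : 1 ≤ k) (hm : 1 ≤ m)
    (C : ℕ → Finset ℕ)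
    (hCsub : ∀ i ∈ Finset.Icc 1 p, C i ⊆ Finset.Icc 1 m)
    (hCdisj : ∀ i ∈ Finset.Icc 1 p, ∀ j ∈ Finset.Icc 1 p, i ≠ j → Disjoint (C i) (C j))
    (hk1 : ∑ i ∈ Finset.Icc 1 (p - 1), (C i).card < k)
    (hk2 : k ≤ ∑ i ∈ Finset.Icc 1 p, (C i).card)
    (u : ℕ) (hu : u = (∑ i ∈ Finset.Icc 1 p, (C i).card) - k)
    (B : ℕ → Finset ℕ)
    (hBsub : ∀ i ∈ Finset.Icc 1 r, B i ⊆ Finset.Icc 1 k)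
    (hBne : ∀ i ∈ Finset.Icc 1 r, (B i).Nonempty)
    (hBdisj : ∀ i ∈ Finset.Icc 1 r, ∀ j ∈ Finset.Icc 1 r, i ≠ j → Disjoint (B i) (B j))
    (hBC : ∀ i ∈ Finset.Icc 1 r, B i ⊆ (Finset.Icc 1 (min i p)).biUnion C)
    (hcover : (Finset.Icc 1 r).biUnion B = Finset.Icc 1 k) :
    (∑ i ∈ Finset.Icc 1 r, i * (B i).card =
        (∑ i ∈ Finset.Icc 1 (p - 1), i * (C i).card) + p * ((C p).card - u)) ↔
      (r = p ∧ (∀ i ∈ Finset.Icc 1 (r - 1), B i = C i) ∧ B r ⊆ C r) := by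
  classical
  -- basic sum facts
  have hSr : ∑ i ∈ Finset.Icc 1 r, (B i).card = k := by
    have h := Finset.card_biUnion hBdisj
    rw [hcover, Nat.card_Icc] at h
    omega
  have hSmono : ∀ j j', j ≤ j' →
      (∑ i ∈ Finset.Icc 1 j, (B i).card) ≤ ∑ i ∈ Finset.Icc 1 j', (B i).card :=
    fun j j' h => Finset.sum_le_sum_of_subset (Finset.Icc_subset_Icc_right h)
  have hTmono : ∀ j j', j ≤ j' →
      (∑ i ∈ Finset.Icc 1 j, (C i).card) ≤ ∑ i ∈ Finset.Icc 1 j', (C i).card :=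
    fun j j' h => Finset.sum_le_sum_of_subset (Finset.Icc_subset_Icc_right h)
  have hUB : ∀ j, j ≤ r →
      ((Finset.Icc 1 j).biUnion B).card = ∑ i ∈ Finset.Icc 1 j, (B i).card := by
    intro j hj
    refine Finset.card_biUnion ?_
    intro a ha b hb hab
    rw [Finset.mem_coe, Finset.mem_Icc] at ha hb
    exact hBdisj a (by rw [Finset.mem_Icc]; omega) b (by rw [Finset.mem_Icc]; omega) hab
  have hUC : ∀ j, j ≤ p →
      ((Finset.Icc 1 j).biUnion C).card = ∑ i ∈ Finset.Icc 1 j, (C i).card := by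
    intro j hj
    refine Finset.card_biUnion ?_
    intro a ha b hb hab
    rw [Finset.mem_coe, Finset.mem_Icc] at ha hb
    exact hCdisj a (by rw [Finset.mem_Icc]; omega) b (by rw [Finset.mem_Icc]; omega) hab
  have hsub : ∀ j, j ≤ r →
      (Finset.Icc 1 j).biUnion B ⊆ (Finset.Icc 1 (min j p)).biUnion C := by
    intro j hj x hx
    rw [Finset.mem_biUnion] at hx ⊢
    obtain ⟨i, hi, hxB⟩ := hx
    rw [Finset.mem_Icc] at hi
    have := hBC i (by rw [Finset.mem_Icc]; omega) hxB
    rw [Finset.mem_biUnion] at this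
    obtain ⟨l, hl, hxC⟩ := this
    rw [Finset.mem_Icc] at hl
    exact ⟨l, by rw [Finset.mem_Icc]; omega, hxC⟩
  have hST : ∀ j, j ≤ p → j ≤ r →
      (∑ i ∈ Finset.Icc 1 j, (B i).card) ≤ ∑ i ∈ Finset.Icc 1 j, (C i).card := by
    intro j hjp hjr
    rw [← hUB j hjr, ← hUC j hjp]
    have h := Finset.card_le_card (hsub j hjr)
    rwa [min_eq_left hjp] at h
  have hpr : p ≤ r := by
    by_contra h
    push_neg at h
    have h1 := hST r (by omega) le_rfl
    have h2 := hTmono r (p - 1) (by omega)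
    omega
  have hSlt : ∀ t, 1 ≤ t → t ≤ r →
      (∑ i ∈ Finset.Icc 1 (t - 1), (B i).card) + 1 ≤ k := by
    intro t h1 h2
    have hb : 1 ≤ (B t).card :=
      Finset.card_pos.mpr (hBne t (by rw [Finset.mem_Icc]; omega))
    have h3 : ∑ i ∈ Finset.Icc 1 t, (B i).card
        = (∑ i ∈ Finset.Icc 1 (t - 1), (B i).card) + (B t).card :=
      aux_step7 (fun i => (B i).card) t h1
    have h4 := hSmono t r h2
    omega
  -- the two counting identities
  have hA := aux_sum7 (fun i => (B i).card) r
  rw [hSr] at hA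
  have hAC := aux_sum7 (fun i => (C i).card) p
  have hCsplit : ∑ i ∈ Finset.Icc 1 p, i * (C i).card
      = (∑ i ∈ Finset.Icc 1 (p - 1), i * (C i).card) + p * (C p).card :=
    aux_step7 (fun i => i * (C i).card) p hp
  have hTp : ∑ i ∈ Finset.Icc 1 p, (C i).card
      = (∑ i ∈ Finset.Icc 1 (p - 1), (C i).card) + (C p).card :=
    aux_step7 (fun i => (C i).card) p hp
  have hRHS : (∑ i ∈ Finset.Icc 1 (p - 1), i * (C i).card) + p * ((C p).card - u) +
      ∑ t ∈ Finset.Icc 1 p, (∑ i ∈ Finset.Icc 1 (t - 1), (C i).card) = p * k := by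
    have e2 : (C p).card - u = k - (∑ i ∈ Finset.Icc 1 (p - 1), (C i).card) := by omega
    rw [e2]
    have e1 : p * ((∑ i ∈ Finset.Icc 1 (p - 1), (C i).card) + (C p).card) =
        p * (∑ i ∈ Finset.Icc 1 (p - 1), (C i).card) + p * (C p).card := mul_add p _ _
    have e3 : p * (k - (∑ i ∈ Finset.Icc 1 (p - 1), (C i).card)) +
        p * (∑ i ∈ Finset.Icc 1 (p - 1), (C i).card) = p * k := by
      rw [← mul_add]
      congr 1
      omega
    rw [hTp] at hAC
    linarith [hAC, hCsplit, e1, e3]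
  -- conversions Icc ↔ Ioc for the t-sums
  have hIoc : ∀ n : ℕ, Finset.Icc 1 n = Finset.Ioc 0 n := fun n => Finset.Icc_add_one_left_eq_Ioc 0 n
  have hsplitS : (∑ t ∈ Finset.Icc 1 r, (∑ i ∈ Finset.Icc 1 (t - 1), (B i).card)) =
      (∑ t ∈ Finset.Ioc 0 p, (∑ i ∈ Finset.Icc 1 (t - 1), (B i).card)) +
      ∑ t ∈ Finset.Ioc p r, (∑ i ∈ Finset.Icc 1 (t - 1), (B i).card) := by
    rw [hIoc r, ← Finset.sum_Ioc_consecutive _ (Nat.zero_le p) hpr]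
  have hTIoc : (∑ t ∈ Finset.Icc 1 p, (∑ i ∈ Finset.Icc 1 (t - 1), (C i).card)) =
      ∑ t ∈ Finset.Ioc 0 p, (∑ i ∈ Finset.Icc 1 (t - 1), (C i).card) := by rw [hIoc p]
  have h1 : (∑ t ∈ Finset.Ioc 0 p, (∑ i ∈ Finset.Icc 1 (t - 1), (B i).card)) ≤
      ∑ t ∈ Finset.Ioc 0 p, (∑ i ∈ Finset.Icc 1 (t - 1), (C i).card) := by
    refine Finset.sum_le_sum ?_
    intro t ht
    rw [Finset.mem_Ioc] at ht
    exact hST (t - 1) (by omega) (by omega)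
  have h2 : (∑ t ∈ Finset.Ioc p r, (∑ i ∈ Finset.Icc 1 (t - 1), (B i).card)) ≤
      (r - p) * (k - 1) := by
    calc (∑ t ∈ Finset.Ioc p r, (∑ i ∈ Finset.Icc 1 (t - 1), (B i).card)) ≤
        ∑ _t ∈ Finset.Ioc p r, (k - 1) := by
          refine Finset.sum_le_sum ?_
          intro t ht
          rw [Finset.mem_Ioc] at ht
          have := hSlt t (by omega) (by omega)
          omega
      _ = (r - p) * (k - 1) := by
          rw [Finset.sum_const, Nat.card_Ioc, smul_eq_mul]
  constructor
  · intro heq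
    have hkey : r * k + (∑ t ∈ Finset.Icc 1 p, (∑ i ∈ Finset.Icc 1 (t - 1), (C i).card)) =
        p * k + ∑ t ∈ Finset.Icc 1 r, (∑ i ∈ Finset.Icc 1 (t - 1), (B i).card) := by
      linarith [hA, hRHS, heq]
    have hrpe : r = p := by
      by_contra hne
      have hlt : p < r := lt_of_le_of_ne hpr (fun h => hne h.symm)
      have e4 : r * k = p * k + (r - p) * k := by
        have h5 : p + (r - p) = r := by omega
        calc r * k = (p + (r - p)) * k := by rw [h5]
          _ = p * k + (r - p) * k := add_mul _ _ _
      have e5 : (r - p) * k = (r - p) * (k - 1) + (r - p) := by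
        have h6 : k - 1 + 1 = k := by omega
        calc (r - p) * k = (r - p) * ((k - 1) + 1) := by rw [h6]
          _ = (r - p) * (k - 1) + (r - p) * 1 := mul_add _ _ _
          _ = (r - p) * (k - 1) + (r - p) := by rw [mul_one]
      have e6 : 1 ≤ r - p := by omega
      linarith [hkey, hsplitS, hTIoc, h1, h2, e4, e5]
    subst hrpe
    -- now r has been replaced by p
    have hzero : (∑ t ∈ Finset.Ioc r r, (∑ i ∈ Finset.Icc 1 (t - 1), (B i).card)) = 0 := by
      simp
    have hsum_eq : (∑ t ∈ Finset.Ioc 0 r, (∑ i ∈ Finset.Icc 1 (t - 1), (B i).card)) =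
        ∑ t ∈ Finset.Ioc 0 r, (∑ i ∈ Finset.Icc 1 (t - 1), (C i).card) := by
      linarith [hkey, hsplitS, hTIoc, hzero]
    have hterm : ∀ t ∈ Finset.Ioc 0 r,
        (∑ i ∈ Finset.Icc 1 (t - 1), (B i).card) =
        ∑ i ∈ Finset.Icc 1 (t - 1), (C i).card := by
      refine (Finset.sum_eq_sum_iff_of_le ?_).mp hsum_eq
      intro t ht
      rw [Finset.mem_Ioc] at ht
      exact hST (t - 1) (by omega) (by omega)
    have hSTeq : ∀ j, j ≤ r - 1 →
        (∑ i ∈ Finset.Icc 1 j, (B i).card) = ∑ i ∈ Finset.Icc 1 j, (C i).card := by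
      intro j hj
      have := hterm (j + 1) (by rw [Finset.mem_Ioc]; omega)
      simpa using this
    have hUeq : ∀ j, j ≤ r - 1 →
        (Finset.Icc 1 j).biUnion B = (Finset.Icc 1 j).biUnion C := by
      intro j hj
      refine Finset.eq_of_subset_of_card_le ?_ ?_
      · have hs := hsub j (by omega)
        rwa [min_eq_left (by omega)] at hs
      · rw [hUB j (by omega), hUC j (by omega), ← hSTeq j hj]
    have hBeqC : ∀ i ∈ Finset.Icc 1 (r - 1), B i = C i := by
      intro i hi
      rw [Finset.mem_Icc] at hi
      have hsubBC : B i ⊆ C i := by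
        intro x hx
        have hxU : x ∈ (Finset.Icc 1 i).biUnion C := by
          rw [← hUeq i (by omega)]
          exact Finset.mem_biUnion.mpr ⟨i, Finset.mem_Icc.mpr ⟨hi.1, le_rfl⟩, hx⟩
        obtain ⟨j, hj, hxC⟩ := Finset.mem_biUnion.mp hxU
        rw [Finset.mem_Icc] at hj
        rcases eq_or_lt_of_le hj.2 with hji | hji
        · rwa [hji] at hxC
        · exfalso
          have hxUj : x ∈ (Finset.Icc 1 j).biUnion B := by
            rw [hUeq j (by omega)]
            exact Finset.mem_biUnion.mpr ⟨j, Finset.mem_Icc.mpr ⟨hj.1, le_rfl⟩, hxC⟩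
          obtain ⟨l, hl, hxB⟩ := Finset.mem_biUnion.mp hxUj
          rw [Finset.mem_Icc] at hl
          have hd := hBdisj l (by rw [Finset.mem_Icc]; omega) i
            (by rw [Finset.mem_Icc]; omega) (by omega)
          exact (Finset.disjoint_left.mp hd hxB) hx
      refine Finset.eq_of_subset_of_card_le hsubBC ?_
      have h1' : ∑ l ∈ Finset.Icc 1 i, (B l).card
          = (∑ l ∈ Finset.Icc 1 (i - 1), (B l).card) + (B i).card :=
        aux_step7 (fun l => (B l).card) i (by omega)
      have h2' : ∑ l ∈ Finset.Icc 1 i, (C l).card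
          = (∑ l ∈ Finset.Icc 1 (i - 1), (C l).card) + (C i).card :=
        aux_step7 (fun l => (C l).card) i (by omega)
      have h3' := hSTeq i (by omega)
      have h4' := hSTeq (i - 1) (by omega)
      omega
    refine ⟨rfl, hBeqC, ?_⟩
    intro x hx
    have hxU := hBC r (by rw [Finset.mem_Icc]; omega) hx
    rw [min_self] at hxU
    obtain ⟨j, hj, hxC⟩ := Finset.mem_biUnion.mp hxU
    rw [Finset.mem_Icc] at hj
    rcases eq_or_lt_of_le hj.2 with e | hlt
    · rwa [e] at hxC
    · exfalso
      have hxU2 : x ∈ (Finset.Icc 1 (r - 1)).biUnion C :=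
        Finset.mem_biUnion.mpr ⟨j, Finset.mem_Icc.mpr ⟨hj.1, by omega⟩, hxC⟩
      rw [← hUeq (r - 1) le_rfl] at hxU2
      obtain ⟨l, hl, hxB⟩ := Finset.mem_biUnion.mp hxU2
      rw [Finset.mem_Icc] at hl
      have hd := hBdisj l (by rw [Finset.mem_Icc]; omega) r
        (by rw [Finset.mem_Icc]; omega) (by omega)
      exact (Finset.disjoint_left.mp hd hxB) hx
  · rintro ⟨hre, hBe, hBr⟩
    subst hre
    have hibs : (∑ i ∈ Finset.Icc 1 (r - 1), i * (B i).card) =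
        ∑ i ∈ Finset.Icc 1 (r - 1), i * (C i).card :=
      Finset.sum_congr rfl (fun i hi => by rw [hBe i hi])
    have hbs : (∑ i ∈ Finset.Icc 1 (r - 1), (B i).card) =
        ∑ i ∈ Finset.Icc 1 (r - 1), (C i).card :=
      Finset.sum_congr rfl (fun i hi => by rw [hBe i hi])
    have hstepB : ∑ i ∈ Finset.Icc 1 r, (B i).card
        = (∑ i ∈ Finset.Icc 1 (r - 1), (B i).card) + (B r).card :=
      aux_step7 (fun i => (B i).card) r hp
    have hstepiB : ∑ i ∈ Finset.Icc 1 r, i * (B i).card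
        = (∑ i ∈ Finset.Icc 1 (r - 1), i * (B i).card) + r * (B r).card :=
      aux_step7 (fun i => i * (B i).card) r hp
    have hbp : (C r).card - u = (B r).card := by omega
    rw [hstepiB, hibs, hbp]
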